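/- Let F(n) be the n-th Fibonacci number. Then both limits lim_{n→∞} F(2^{2n}) and lim_{n→∞} F(2^{2n+1}) exist in ℤ_2, and each limit L satisfies 5L^2 + 3 = 0 (i.e. L = ±√(-3/5) in ℤ_2). -/

import Mathlib

open Filter Topology

instance : Fact (Nat.Prime 2) := ⟨by norm_num⟩

namespace Stmt12Aux

noncomputable def F (n : ℕ) : ℤ_[2] := (Nat.fib n : ℤ_[2])

noncomputable def Lc (n : ℕ) : ℤ_[2] := 2 * F (n + 1) - F n

lemma F_add_two (n : ℕ) : F (n + 2) = F n + F (n + 1) := by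
  simp [F, Nat.fib_add_two]

/-- Cassini -/
lemma cassini (n : ℕ) : F (n+1)^2 - F (n+1) * F n - F n ^ 2 = (-1)^n := by
  induction n with
  | zero => simp [F]
  | succ n ih =>
    rw [F_add_two]
    rw [pow_succ]
    linear_combination (-1 : ℤ_[2]) * ih

lemma cassini_even {n : ℕ} (hn : Even n) :
    F (n+1)^2 - F (n+1) * F n - F n ^ 2 = 1 := by
  rw [cassini, hn.neg_one_pow]

lemma F_two_mul (n : ℕ) : F (2 * n) = F n * Lc n := by
  have h : Nat.fib n ≤ 2 * Nat.fib (n + 1) :=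
    le_trans Nat.fib_le_fib_succ (by omega)
  simp only [F, Lc, Nat.fib_two_mul]
  push_cast [h]
  ring

lemma F_two_mul_add_one (n : ℕ) : F (2 * n + 1) = F (n+1)^2 + F n ^ 2 := by
  simp only [F, Nat.fib_two_mul_add_one]; push_cast; ring

lemma Lc_two_mul {n : ℕ} (hn : Even n) : Lc (2 * n) = Lc n ^ 2 - 2 := by
  have hc := cassini_even hn
  simp only [Lc, F_two_mul_add_one, F_two_mul]
  linear_combination (-2 : ℤ_[2]) * hc

lemma five_F_sq {n : ℕ} (hn : Even n) : 5 * F n ^ 2 + 3 = Lc n ^ 2 - 1 := by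
  have hc := cassini_even hn
  simp only [Lc]
  linear_combination (-4 : ℤ_[2]) * hc

lemma even_two_pow {k : ℕ} (hk : 1 ≤ k) : Even (2 ^ k) := by
  exact (Nat.even_pow' (by omega)).mpr even_two

/-- key induction -/
lemma Lc_form : ∀ k : ℕ, 1 ≤ k → ∃ u : ℤ_[2], Lc (2 ^ k) = 2 ^ (k + 1) * u - 1 := by
  intro k hk
  induction k, hk using Nat.le_induction with
  | base =>
    refine ⟨1, ?_⟩
    have h2 : Lc (2 ^ 1) = 3 := by
      show (2 : ℤ_[2]) * F 3 - F 2 = 3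
      simp [F, Nat.fib]
      norm_num
    rw [h2]; norm_num
  | succ k hk ih =>
    obtain ⟨u, hu⟩ := ih
    refine ⟨2 ^ k * u ^ 2 - u, ?_⟩
    have h2 : (2:ℕ) ^ (k+1) = 2 * 2 ^ k := by ring
    rw [h2, Lc_two_mul (even_two_pow hk), hu]
    ring

lemma step {k : ℕ} (hk : 1 ≤ k) :
    ∃ c : ℤ_[2], F (2 ^ (k + 2)) - F (2 ^ k) = 2 ^ (k + 1) * c := by
  obtain ⟨u, hu⟩ := Lc_form k hk
  obtain ⟨v, hv⟩ := Lc_form (k + 1) (by omega)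
  refine ⟨F (2 ^ k) * (2 ^ (k + 2) * (u * v) - u - 2 * v), ?_⟩
  have e1 : (2:ℕ) ^ (k + 2) = 2 * 2 ^ (k + 1) := by ring
  have e2 : (2:ℕ) ^ (k + 1) = 2 * 2 ^ k := by ring
  rw [e1, F_two_mul, e2, F_two_mul, ← e2, hu, hv]
  ring

lemma norm_two : ‖(2 : ℤ_[2])‖ = 1 / 2 := by
  have h := @PadicInt.norm_p 2 _
  norm_num at h
  simpa using h

lemma norm_step {k : ℕ} (hk : 1 ≤ k) :
    ‖F (2 ^ (k + 2)) - F (2 ^ k)‖ ≤ (1 / 2) ^ (k + 1) := by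
  obtain ⟨c, hc⟩ := step hk
  rw [hc, norm_mul, norm_pow, norm_two]
  calc (1/2 : ℝ) ^ (k+1) * ‖c‖ ≤ (1/2) ^ (k+1) * 1 := by
        gcongr; exact PadicInt.norm_le_one c
    _ = (1/2) ^ (k+1) := mul_one _

lemma eq_small {k : ℕ} (hk : 1 ≤ k) :
    ∃ d : ℤ_[2], 5 * F (2 ^ k) ^ 2 + 3 = 2 ^ (k + 2) * d := by
  obtain ⟨u, hu⟩ := Lc_form k hk
  refine ⟨u * (2 ^ k * u - 1), ?_⟩
  rw [five_F_sq (even_two_pow hk), hu]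
  ring

lemma norm_small {k : ℕ} (hk : 1 ≤ k) :
    ‖(5 : ℤ_[2]) * F (2 ^ k) ^ 2 + 3‖ ≤ (1 / 2) ^ (k + 2) := by
  obtain ⟨d, hd⟩ := eq_small hk
  rw [hd, norm_mul, norm_pow, norm_two]
  calc (1/2 : ℝ) ^ (k+2) * ‖d‖ ≤ (1/2) ^ (k+2) * 1 := by
        gcongr; exact PadicInt.norm_le_one d
    _ = (1/2) ^ (k+2) := mul_one _

lemma key (e : ℕ → ℕ) (hmono : ∀ n, e (n + 1) = e n + 2)
    (hgrow : ∀ n, n ≤ e n) :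
    ∃ L : ℤ_[2], Tendsto (fun n => F (2 ^ e n)) atTop (𝓝 L) ∧ 5 * L ^ 2 + 3 = 0 := by
  have hcauchy : CauchySeq (fun n => F (2 ^ e n)) := by
    apply cauchySeq_of_le_geometric (1/2) 1 (by norm_num)
    intro n
    rw [dist_eq_norm, one_mul, hmono n]
    rcases Nat.eq_zero_or_pos (e n) with h0 | hpos
    · have hn0 : n = 0 := by have := hgrow n; omega
      subst hn0
      calc ‖F (2 ^ e 0) - F (2 ^ (e 0 + 2))‖ ≤ 1 := PadicInt.norm_le_one _
        _ = (1/2 : ℝ) ^ 0 := by norm_num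
      -- note: pow n with n = 0
    · calc ‖F (2 ^ e n) - F (2 ^ (e n + 2))‖ = ‖F (2 ^ (e n + 2)) - F (2 ^ e n)‖ := by
            rw [← norm_neg]; ring_nf
        _ ≤ (1/2) ^ (e n + 1) := norm_step hpos
        _ ≤ (1/2 : ℝ) ^ n := by
            apply pow_le_pow_of_le_one (by norm_num) (by norm_num)
            have := hgrow n; omega
  obtain ⟨L, hL⟩ := cauchySeq_tendsto_of_complete hcauchy
  refine ⟨L, hL, ?_⟩
  have hcont : Continuous (fun x : ℤ_[2] => 5 * x ^ 2 + 3) := by continuity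
  have h1 : Tendsto (fun n => 5 * F (2 ^ e n) ^ 2 + 3) atTop (𝓝 (5 * L ^ 2 + 3)) :=
    (hcont.tendsto L).comp hL
  have h2 : Tendsto (fun n => 5 * F (2 ^ e n) ^ 2 + 3) atTop (𝓝 0) := by
    apply squeeze_zero_norm (a := fun n => (1/2 : ℝ) ^ n)
    · intro n
      rcases Nat.eq_zero_or_pos (e n) with h0 | hpos
      · have hn0 : n = 0 := by have := hgrow n; omega
        subst hn0
        calc ‖(5:ℤ_[2]) * F (2 ^ e 0) ^ 2 + 3‖ ≤ 1 := PadicInt.norm_le_one _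
          _ = (1/2 : ℝ) ^ 0 := by norm_num
      · calc ‖(5:ℤ_[2]) * F (2 ^ e n) ^ 2 + 3‖ ≤ (1/2) ^ (e n + 2) := norm_small hpos
          _ ≤ (1/2 : ℝ) ^ n := by
              apply pow_le_pow_of_le_one (by norm_num) (by norm_num)
              have := hgrow n; omega
    · exact tendsto_pow_atTop_nhds_zero_of_lt_one (by norm_num) (by norm_num)
  exact tendsto_nhds_unique h1 h2

end Stmt12Aux

open Stmt12Aux in
/-- Both limits `lim F(2^(2n))` and `lim F(2^(2n+1))` exist in `ℤ_2`, and each limit `L`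
satisfies `5L² + 3 = 0`. -/
theorem stmt_12 :
    ∃ L₁ L₂ : ℤ_[2],
      Tendsto (fun n : ℕ => ((Nat.fib (2 ^ (2 * n)) : ℕ) : ℤ_[2])) atTop (𝓝 L₁) ∧
      Tendsto (fun n : ℕ => ((Nat.fib (2 ^ (2 * n + 1)) : ℕ) : ℤ_[2])) atTop (𝓝 L₂) ∧
      5 * L₁ ^ 2 + 3 = 0 ∧ 5 * L₂ ^ 2 + 3 = 0 := by
  obtain ⟨L₁, hT₁, hE₁⟩ := key (fun n => 2 * n)
    (fun n => show 2 * (n + 1) = 2 * n + 2 by omega) (fun n => show n ≤ 2 * n by omega)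
  obtain ⟨L₂, hT₂, hE₂⟩ := key (fun n => 2 * n + 1)
    (fun n => show 2 * (n + 1) + 1 = 2 * n + 1 + 2 by omega)
    (fun n => show n ≤ 2 * n + 1 by omega)
  exact ⟨L₁, L₂, hT₁, hT₂, hE₁, hE₂⟩
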